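/- arXiv:2110.04154 — 2 statements merged into one kernel-verified Lean document; each statement's English description precedes it below -/
import Mathlib

section
/- For n ≥ 4, if n is even and n is not of the form 2^m − 1 or 2^m − 3, then det(FQ_n) = ⌈lg(n+1)⌉ + 1. -/
/-- `S` is a determining set for `G`: the only automorphism fixing `S` pointwise
is the identity. -/
def IsDeterminingSet {V : Type*} (G : SimpleGraph V) (S : Set V) : Prop :=
  ∀ φ : G ≃g G, (∀ v ∈ S, φ v = v) → ∀ v, φ v = v

/-- The determining number: minimum size of a determining set. -/
noncomputable def detNum {V : Type*} (G : SimpleGraph V) : ℕ :=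
  sInf {r | ∃ S : Set V, S.ncard = r ∧ IsDeterminingSet G S}

/-- A coloring is distinguishing if the only automorphism preserving all color
classes is the identity. -/
def IsDistinguishing {V : Type*} (G : SimpleGraph V) {d : ℕ} (c : V → Fin d) : Prop :=
  ∀ φ : G ≃g G, (∀ v, c (φ v) = c v) → ∀ v, φ v = v

/-- The distinguishing number: least `d` admitting a distinguishing `d`-coloring. -/
noncomputable def distNum {V : Type*} (G : SimpleGraph V) : ℕ :=
  sInf {d | ∃ c : V → Fin d, IsDistinguishing G c}

/-- `S` is a color class of a 2-distinguishing coloring: every automorphism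
preserving `S` setwise is the identity. -/
def IsDistClass {V : Type*} (G : SimpleGraph V) (S : Set V) : Prop :=
  ∀ φ : G ≃g G, (∀ v, φ v ∈ S ↔ v ∈ S) → ∀ v, φ v = v

/-- The cost of 2-distinguishing: minimum size of a color class over all
2-distinguishing colorings. -/
noncomputable def costNum {V : Type*} (G : SimpleGraph V) : ℕ :=
  sInf {m | ∃ S : Set V, S.ncard = m ∧ IsDistClass G S}

/-- The folded hypercube `FQ_n`: binary `n`-vectors, adjacent iff their Hamming
distance is 1 or `n`. -/
def FQ (n : ℕ) : SimpleGraph (Fin n → ZMod 2) :=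
  SimpleGraph.fromRel (fun x y => hammingDist x y = 1 ∨ hammingDist x y = n)


open Finset

namespace FQaux

variable {m : ℕ}

/-- Weight of a binary vector. -/
def wt (v : Fin m → ZMod 2) : ℕ := #{i | v i ≠ 0}

lemma wt_eq_sum (v : Fin m → ZMod 2) :
    wt v = ∑ i, (if v i ≠ 0 then 1 else 0) := by
  rw [wt, Finset.card_filter]

lemma zmod2_cases (a : ZMod 2) : a = 0 ∨ a = 1 := by
  revert a; decide

lemma two_eq_zero : (1 : ZMod 2) + 1 = 0 := by decide

lemma wt_zero : wt (0 : Fin m → ZMod 2) = 0 := by simp [wt]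

lemma wt_eq_zero {v : Fin m → ZMod 2} (h : wt v = 0) : v = 0 := by
  rw [wt, Finset.card_eq_zero, Finset.filter_eq_empty_iff] at h
  funext i
  have := h (Finset.mem_univ i)
  simpa using this

lemma hammingDist_eq_wt (x y : Fin m → ZMod 2) : hammingDist x y = wt (x + y) := by
  rw [hammingDist, wt]
  congr 1
  apply Finset.filter_congr
  intro i _
  constructor
  · intro h h0
    rcases zmod2_cases (x i) with hx | hx <;> rcases zmod2_cases (y i) with hy | hy <;>
      simp_all
  · intro h h0
    rcases zmod2_cases (x i) with hx | hx <;> rcases zmod2_cases (y i) with hy | hy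
    · exact h (by rw [Pi.add_apply, hx, hy, add_zero])
    · rw [hx, hy] at h0; exact absurd h0 (by decide)
    · rw [hx, hy] at h0; exact absurd h0 (by decide)
    · exact h (by rw [Pi.add_apply, hx, hy, two_eq_zero])

def sing (j : Fin m) : Fin m → ZMod 2 := Pi.single j 1

lemma sing_apply (j i : Fin m) : sing j i = if i = j then 1 else 0 := by
  rw [sing, Pi.single_apply]

lemma wt_sing (j : Fin m) : wt (sing j) = 1 := by
  rw [wt]
  rw [show ({i | sing j i ≠ 0} : Finset (Fin m)) = {j} from ?_]
  · simp
  · ext i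
    simp only [Finset.mem_filter, Finset.mem_univ, true_and, Finset.mem_singleton,
      sing_apply]
    rcases eq_or_ne i j with rfl | hij
    · simp
    · simp [hij]

lemma wt_comp_perm (v : Fin m → ZMod 2) (σ : Equiv.Perm (Fin m)) :
    wt (v ∘ σ) = wt v := by
  rw [wt_eq_sum, wt_eq_sum]
  exact Equiv.sum_comp σ (fun i => if v i ≠ 0 then 1 else 0)

lemma wt_add_le (v w : Fin m → ZMod 2) : wt (v + w) ≤ wt v + wt w := by
  rw [wt_eq_sum, wt_eq_sum, wt_eq_sum, ← Finset.sum_add_distrib]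
  apply Finset.sum_le_sum
  intro i _
  rcases zmod2_cases (v i) with h | h <;> rcases zmod2_cases (w i) with h' | h' <;>
    simp [h, h', two_eq_zero]

lemma wt_add_wt_add_ones (v : Fin m → ZMod 2) :
    wt v + wt (v + 1) = m := by
  rw [wt_eq_sum, wt_eq_sum, ← Finset.sum_add_distrib]
  have h1 : ∀ i : Fin m, ((if v i ≠ 0 then 1 else 0) + (if (v + 1) i ≠ 0 then 1 else 0)) = 1 := by
    intro i
    have : (v + 1) i = v i + 1 := rfl
    rcases zmod2_cases (v i) with h | h <;> simp [this, h, two_eq_zero]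
  rw [Finset.sum_congr rfl (fun i _ => h1 i)]
  simp

lemma wt_add_ones (v : Fin m → ZMod 2) : wt (v + 1) = m - wt v := by
  have := wt_add_wt_add_ones v
  omega

lemma wt_le (v : Fin m → ZMod 2) : wt v ≤ m := by
  have := wt_add_wt_add_ones v
  omega

lemma add_ones_add_ones (v : Fin m → ZMod 2) : v + 1 + 1 = v := by
  funext i
  show v i + 1 + 1 = v i
  rw [add_assoc, two_eq_zero, add_zero]

lemma wt_eq_one {v : Fin m → ZMod 2} (h : wt v = 1) : ∃ j, v = sing j := by
  rw [wt, Finset.card_eq_one] at h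
  obtain ⟨j, hj⟩ := h
  have hmem : ∀ i : Fin m, v i ≠ 0 ↔ i = j := by
    intro i
    rw [← Finset.mem_singleton, ← hj]
    simp
  refine ⟨j, funext fun i => ?_⟩
  rw [sing_apply]
  rcases eq_or_ne i j with rfl | hij
  · rcases zmod2_cases (v i) with h0 | h0
    · exfalso
      have := (hmem i).mpr rfl
      exact this h0
    · simp [h0]
  · have : v i = 0 := by
      by_contra hne
      exact hij ((hmem i).mp hne)
    simp [this, hij]

/-! ### Projection from extended coordinates -/

variable {n : ℕ}

/-- Projection from `(n+1)`-bit vectors to vertices of `FQ n`. -/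
def pr (v : Fin (n + 1) → ZMod 2) : Fin n → ZMod 2 :=
  fun i => v i.castSucc + v (Fin.last n)

/-- Canonical lift of a vertex. -/
def lift (x : Fin n → ZMod 2) : Fin (n + 1) → ZMod 2 := Fin.snoc x 0

lemma lift_castSucc (x : Fin n → ZMod 2) (i : Fin n) : lift x i.castSucc = x i :=
  Fin.snoc_castSucc _ _ _

lemma lift_last (x : Fin n → ZMod 2) : lift x (Fin.last n) = 0 :=
  Fin.snoc_last _ _

lemma pr_lift (x : Fin n → ZMod 2) : pr (lift x) = x := by
  funext i
  rw [pr, lift_castSucc, lift_last, add_zero]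

lemma lift_add (x y : Fin n → ZMod 2) : lift (x + y) = lift x + lift y := by
  funext i
  induction i using Fin.lastCases with
  | last => rw [Pi.add_apply, lift_last, lift_last, lift_last, add_zero]
  | cast i => rw [Pi.add_apply, lift_castSucc, lift_castSucc, lift_castSucc]; rfl

lemma pr_add (v w : Fin (n + 1) → ZMod 2) : pr (v + w) = pr v + pr w := by
  funext i
  show (v + w) i.castSucc + (v + w) (Fin.last n) = _
  show _ = (v i.castSucc + v (Fin.last n)) + (w i.castSucc + w (Fin.last n))
  rw [Pi.add_apply, Pi.add_apply]
  ring

lemma pr_ones : pr (1 : Fin (n + 1) → ZMod 2) = 0 := by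
  funext i
  show (1 : ZMod 2) + 1 = 0
  exact two_eq_zero

lemma pr_zero : pr (0 : Fin (n + 1) → ZMod 2) = 0 := by
  funext i
  show (0 : ZMod 2) + 0 = 0
  rw [add_zero]

lemma zmod2_eq_or_eq_add_one (a b : ZMod 2) : a = b ∨ a = b + 1 := by
  revert a b; decide

lemma zmod2_helper2 (x y b : ZMod 2) (h : x + (b + 1) = y + b) : x = y + 1 := by
  revert x y b; decide

lemma pr_eq_iff {v w : Fin (n + 1) → ZMod 2} : pr v = pr w ↔ v = w ∨ v = w + 1 := by
  constructor
  · intro h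
    have hco : ∀ i : Fin n, v i.castSucc + v (Fin.last n) = w i.castSucc + w (Fin.last n) :=
      fun i => congrFun h i
    rcases zmod2_eq_or_eq_add_one (v (Fin.last n)) (w (Fin.last n)) with hab | hab
    · left
      funext i
      induction i using Fin.lastCases with
      | last => exact hab
      | cast i =>
        have := hco i
        rw [hab] at this
        exact add_right_cancel this
    · right
      funext i
      induction i using Fin.lastCases with
      | last => exact hab
      | cast i =>
        have := hco i
        rw [hab] at this
        exact zmod2_helper2 _ _ _ this
  · rintro (rfl | rfl)
    · rfl
    · rw [pr_add, pr_ones, add_zero]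

lemma lift_pr (v : Fin (n + 1) → ZMod 2) : lift (pr v) = v ∨ lift (pr v) = v + 1 := by
  have : pr (lift (pr v)) = pr v := pr_lift _
  exact pr_eq_iff.mp this

lemma wt_lift (x : Fin n → ZMod 2) : wt (lift x) = wt x := by
  rw [wt_eq_sum, wt_eq_sum, Fin.sum_univ_castSucc]
  simp only [lift_castSucc, lift_last]
  simp

lemma pr_surj (x : Fin n → ZMod 2) : pr (lift x) = x := pr_lift x

lemma wt_pr_cases (v : Fin (n + 1) → ZMod 2) :
    wt (pr v) = wt v ∨ wt (pr v) = n + 1 - wt v := by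
  rcases lift_pr v with h | h
  · left; rw [← wt_lift (pr v), h]
  · right; rw [← wt_lift (pr v), h, wt_add_ones]

/-- Adjacency in terms of canonical lifts. -/
lemma adj_iff (hn : 2 ≤ n) (x y : Fin n → ZMod 2) :
    (FQ n).Adj x y ↔ (wt (x + y) = 1 ∨ wt (x + y) = n) := by
  rw [FQ, SimpleGraph.fromRel_adj]
  rw [hammingDist_eq_wt, hammingDist_eq_wt, add_comm y x, or_self]
  constructor
  · exact fun h => h.2
  · intro h
    refine ⟨fun hxy => ?_, h⟩
    subst hxy
    have : x + x = 0 := by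
      funext i
      show x i + x i = 0
      rcases zmod2_cases (x i) with h0 | h0 <;> rw [h0] <;> first | rw [add_zero] | exact two_eq_zero
    rw [this, wt_zero] at h
    omega

lemma add_self_vec {m : ℕ} (v : Fin m → ZMod 2) : v + v = 0 := by
  funext i
  show v i + v i = 0
  rcases zmod2_cases (v i) with h0 | h0 <;> rw [h0]
  · rw [add_zero]
  · exact two_eq_zero

lemma wt_ones : wt (1 : Fin (n + 1) → ZMod 2) = n + 1 := by
  have := wt_add_wt_add_ones (0 : Fin (n + 1) → ZMod 2)
  rw [wt_zero, zero_add, zero_add] at this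
  exact this

lemma pr_eq_pr_wt {v w : Fin (n + 1) → ZMod 2} (h : pr v = pr w) :
    wt (v + w) = 0 ∨ wt (v + w) = n + 1 := by
  rcases pr_eq_iff.mp h with rfl | rfl
  · left; rw [add_self_vec, wt_zero]
  · right
    have h1 : w + 1 + w = (1 : Fin (n + 1) → ZMod 2) := by
      have : w + 1 + w = w + w + 1 := by ring
      rw [this, add_self_vec, zero_add]
    rw [h1, wt_ones]

/-- Adjacency via arbitrary representatives. -/
lemma adj_pr (hn : 2 ≤ n) (v w : Fin (n + 1) → ZMod 2) :
    (FQ n).Adj (pr v) (pr w) ↔ (wt (v + w) = 1 ∨ wt (v + w) = n) := by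
  rw [adj_iff hn, ← pr_add]
  rcases wt_pr_cases (v + w) with h | h
  · rw [h]
  · rw [h]
    have hle := wt_le (v + w)
    constructor
    · intro hc
      rcases hc with hc | hc <;> omega
    · intro hc
      rcases hc with hc | hc <;> omega
/-! ### Automorphisms -/

def gen (j : Fin (n + 1)) : Fin n → ZMod 2 := pr (sing j)

lemma gen_injective (hn : 2 ≤ n) : Function.Injective (gen (n := n)) := by
  intro j j' h
  rcases pr_eq_iff.mp h with h1 | h1
  · by_contra hne
    have := congrFun h1 j
    rw [sing_apply, sing_apply, if_pos rfl, if_neg hne] at this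
    exact absurd this (by decide)
  · have hw := congrArg wt h1
    rw [wt_sing] at hw
    have : wt (sing j' + 1) = n + 1 - wt (sing j') := wt_add_ones _
    rw [wt_sing] at this
    omega

lemma comp_perm_add {m : ℕ} (v w : Fin m → ZMod 2) (f : Fin m → Fin m) :
    (v + w) ∘ f = v ∘ f + w ∘ f := rfl

lemma ones_comp_perm {m : ℕ} (f : Fin m → Fin m) :
    (1 : Fin m → ZMod 2) ∘ f = 1 := rfl

lemma pr_comp_lift_pr (v : Fin (n + 1) → ZMod 2) (f : Fin (n + 1) → Fin (n + 1)) :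
    pr (lift (pr v) ∘ f) = pr (v ∘ f) := by
  rcases lift_pr v with h | h <;> rw [h]
  rw [comp_perm_add, ones_comp_perm]
  rw [pr_add, pr_ones, add_zero]

variable (hn : 2 ≤ n)

/-- The automorphism of `FQ n` induced by a permutation of the `n+1` extended
coordinates. -/
def isoA (σ : Equiv.Perm (Fin (n + 1))) : FQ n ≃g FQ n where
  toFun := fun x => pr (lift x ∘ ⇑σ⁻¹)
  invFun := fun x => pr (lift x ∘ ⇑σ)
  left_inv := by
    intro x
    show pr (lift (pr (lift x ∘ ⇑σ⁻¹)) ∘ ⇑σ) = x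
    rw [pr_comp_lift_pr]
    have : lift x ∘ ⇑σ⁻¹ ∘ ⇑σ = lift x := by
      funext i
      show lift x (σ⁻¹ (σ i)) = lift x i
      rw [Equiv.Perm.inv_def, Equiv.symm_apply_apply]
    rw [show (lift x ∘ ⇑σ⁻¹) ∘ ⇑σ = lift x ∘ ⇑σ⁻¹ ∘ ⇑σ from rfl, this, pr_lift]
  right_inv := by
    intro x
    show pr (lift (pr (lift x ∘ ⇑σ)) ∘ ⇑σ⁻¹) = x
    rw [pr_comp_lift_pr]
    have : lift x ∘ ⇑σ ∘ ⇑σ⁻¹ = lift x := by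
      funext i
      show lift x (σ (σ⁻¹ i)) = lift x i
      rw [Equiv.Perm.inv_def, Equiv.apply_symm_apply]
    rw [show (lift x ∘ ⇑σ) ∘ ⇑σ⁻¹ = lift x ∘ ⇑σ ∘ ⇑σ⁻¹ from rfl, this, pr_lift]
  map_rel_iff' := by
    intro x y
    show (FQ n).Adj (pr (lift x ∘ ⇑σ⁻¹)) (pr (lift y ∘ ⇑σ⁻¹)) ↔ (FQ n).Adj x y
    rw [adj_pr hn, ← comp_perm_add, wt_comp_perm]
    rw [show x = pr (lift x) from (pr_lift x).symm, show y = pr (lift y) from (pr_lift y).symm,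
      adj_pr hn]
    rw [pr_lift, pr_lift]

lemma isoA_pr (σ : Equiv.Perm (Fin (n + 1))) (v : Fin (n + 1) → ZMod 2) :
    isoA hn σ (pr v) = pr (v ∘ ⇑σ⁻¹) := by
  show pr (lift (pr v) ∘ ⇑σ⁻¹) = pr (v ∘ ⇑σ⁻¹)
  exact pr_comp_lift_pr v _

lemma sing_comp_perm (σ : Equiv.Perm (Fin (n + 1))) (j : Fin (n + 1)) :
    sing j ∘ ⇑σ⁻¹ = sing (σ j) := by
  funext i
  show sing j (σ⁻¹ i) = sing (σ j) i
  rw [sing_apply, sing_apply]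
  congr 1
  simp only [eq_iff_iff]
  constructor
  · intro h; rw [← h, Equiv.Perm.inv_def, Equiv.apply_symm_apply]
  · intro h; rw [h, Equiv.Perm.inv_def, Equiv.symm_apply_apply]

lemma isoA_gen (σ : Equiv.Perm (Fin (n + 1))) (j : Fin (n + 1)) :
    isoA hn σ (gen j) = gen (σ j) := by
  rw [gen, isoA_pr, sing_comp_perm, gen]

lemma isoA_zero (σ : Equiv.Perm (Fin (n + 1))) : isoA hn σ 0 = 0 := by
  have h0 : (0 : Fin n → ZMod 2) = pr 0 := pr_zero.symm
  rw [h0, isoA_pr]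
  have : (0 : Fin (n+1) → ZMod 2) ∘ ⇑σ⁻¹ = 0 := rfl
  rw [this]

/-- Translation automorphism. -/
def isoT (a : Fin n → ZMod 2) : FQ n ≃g FQ n where
  toFun := fun x => x + a
  invFun := fun x => x + a
  left_inv := by
    intro x
    show x + a + a = x
    rw [add_assoc, add_self_vec, add_zero]
  right_inv := by
    intro x
    show x + a + a = x
    rw [add_assoc, add_self_vec, add_zero]
  map_rel_iff' := by
    intro x y
    show (FQ n).Adj (x + a) (y + a) ↔ (FQ n).Adj x y
    rw [adj_iff hn, adj_iff hn]
    have : x + a + (y + a) = x + y := by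
      have h1 : x + a + (y + a) = x + y + (a + a) := by ring
      rw [h1, add_self_vec, add_zero]
    rw [this]
/-! ### Rigidity -/

lemma wt_remove {m : ℕ} {v : Fin m → ZMod 2} {j : Fin m} (hj : v j ≠ 0) :
    wt (v + sing j) = wt v - 1 := by
  have hset : ({i | (v + sing j) i ≠ 0} : Finset (Fin m)) = ({i | v i ≠ 0} : Finset (Fin m)).erase j := by
    ext i
    simp only [Finset.mem_filter, Finset.mem_univ, true_and, Finset.mem_erase]
    have hvj : v j = 1 := by
      rcases zmod2_cases (v j) with h | h
      · exact absurd h hj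
      · exact h
    rcases eq_or_ne i j with rfl | hij
    · have : (v + sing i) i = 0 := by
        show v i + sing i i = 0
        rw [sing_apply, if_pos rfl, hvj]
        exact two_eq_zero
      simp [this]
    · have : (v + sing j) i = v i := by
        show v i + sing j i = v i
        rw [sing_apply, if_neg hij, add_zero]
      rw [this]
      simp [hij]
  rw [wt, hset, Finset.card_erase_of_mem]
  · rfl
  · simp only [Finset.mem_filter, Finset.mem_univ, true_and]
    exact hj

lemma wt_sing_add_sing {m : ℕ} {j j' : Fin m} (h : j ≠ j') :
    wt (sing j + sing j') = 2 := by
  have h1 : (sing j + sing j' : Fin m → ZMod 2) j = 1 := by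
    show sing j j + sing j' j = 1
    rw [sing_apply, sing_apply, if_pos rfl, if_neg h, add_zero]
  have hne : (sing j + sing j' : Fin m → ZMod 2) j ≠ 0 := by rw [h1]; decide
  have h2 : wt (sing j + sing j' + sing j) = 1 := by
    have : sing j + sing j' + sing j = sing j' := by
      funext i
      show sing j i + sing j' i + sing j i = sing j' i
      exact (by decide : ∀ a b : ZMod 2, a + b + a = b) _ _
    rw [this, wt_sing]
  rw [wt_remove hne] at h2
  have hle : wt (sing j + sing j') ≤ 2 := by
    have := wt_add_le (sing j) (sing j' : Fin m → ZMod 2)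
    rw [wt_sing, wt_sing] at this
    exact this
  omega

lemma sing_self {m : ℕ} (j : Fin m) : sing j j = 1 := by
  rw [sing_apply, if_pos rfl]

lemma sing_ne {m : ℕ} {i j : Fin m} (h : i ≠ j) : sing j i = 0 := by
  rw [sing_apply, if_neg h]

lemma sing_or_of_sum {j j' a b : Fin (n + 1)} (hjj : j ≠ j')
    (h : sing a + sing b = sing j + sing j') : a = j ∨ a = j' := by
  by_contra hcon
  push_neg at hcon
  obtain ⟨haj, haj'⟩ := hcon
  have hbj : b = j := by
    by_contra hbj
    have h5 := congrFun h j
    simp only [Pi.add_apply] at h5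
    rw [sing_ne (Ne.symm haj), sing_ne (Ne.symm hbj), sing_self, sing_ne hjj] at h5
    exact absurd h5 (by decide)
  have h5 := congrFun h j'
  simp only [Pi.add_apply] at h5
  rw [hbj, sing_ne (Ne.symm haj'), sing_ne (Ne.symm hjj), sing_self] at h5
  exact absurd h5 (by decide)

lemma common_nbr (hn4 : 4 ≤ n) {r : Fin (n + 1) → ZMod 2} {j j' : Fin (n + 1)}
    (hjj : j ≠ j') (c : Fin n → ZMod 2)
    (hc1 : (FQ n).Adj c (pr (r + sing j)))
    (hc2 : (FQ n).Adj c (pr (r + sing j'))) :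
    c = pr r ∨ c = pr (r + sing j + sing j') := by
  have hn : 2 ≤ n := by omega
  have hc1' := (adj_pr hn (lift c) (r + sing j)).mp (by rw [pr_lift]; exact hc1)
  have hc2' := (adj_pr hn (lift c) (r + sing j')).mp (by rw [pr_lift]; exact hc2)
  set p : Fin (n + 1) → ZMod 2 := lift c + (r + sing j) with hp
  set q : Fin (n + 1) → ZMod 2 := lift c + (r + sing j') with hq
  have hpq : q = p + sing j + sing j' := by
    rw [hp, hq]
    funext i
    exact (by decide : ∀ a b c d : ZMod 2, a + (b + d) = a + (b + c) + c + d) _ _ _ _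
  have hqp : p = q + sing j + sing j' := by
    rw [hpq]
    funext i
    exact (by decide : ∀ a c d : ZMod 2, a = a + c + d + c + d) _ _ _
  -- rule out mixed cases
  have hmix1 : ¬(wt p = 1 ∧ wt q = n) := by
    rintro ⟨h1, h2⟩
    have : wt q ≤ wt p + 2 := by
      calc wt q ≤ wt (p + sing j) + wt (sing j') := by rw [hpq]; exact wt_add_le _ _
        _ ≤ wt p + wt (sing j) + wt (sing j') := by
            exact Nat.add_le_add_right (wt_add_le _ _) _
        _ = wt p + 2 := by rw [wt_sing, wt_sing]
    omega
  have hmix2 : ¬(wt p = n ∧ wt q = 1) := by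
    rintro ⟨h1, h2⟩
    have : wt p ≤ wt q + 2 := by
      calc wt p ≤ wt (q + sing j) + wt (sing j') := by rw [hqp]; exact wt_add_le _ _
        _ ≤ wt q + wt (sing j) + wt (sing j') := by
            exact Nat.add_le_add_right (wt_add_le _ _) _
        _ = wt q + 2 := by rw [wt_sing, wt_sing]
    omega
  have key : ∀ p' : Fin (n + 1) → ZMod 2, wt p' = 1 → wt (p' + sing j + sing j') = 1 →
      p' = sing j ∨ p' = sing j' := by
    intro p' h1 h2
    obtain ⟨a, ha⟩ := wt_eq_one h1
    obtain ⟨b, hb⟩ := wt_eq_one h2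
    have hsum : sing a + sing b = sing j + sing j' := by
      rw [← ha, ← hb]
      funext i
      exact (by decide : ∀ x c d : ZMod 2, x + (x + c + d) = c + d) _ _ _
    rcases sing_or_of_sum hjj hsum with h | h
    · left; rw [ha, h]
    · right; rw [ha, h]
  rcases hc1' with h1 | h1 <;> rcases hc2' with h2 | h2
  · -- (1,1)
    have h2' : wt (p + sing j + sing j') = 1 := by rw [← hpq]; exact h2
    rcases key p h1 h2' with h | h
    · left
      have : lift c = r := by
        have := hp
        rw [h] at this
        funext i
        have hi := congrFun this i
        simp only [Pi.add_apply] at hi ⊢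
        exact (by decide : ∀ x y s : ZMod 2, s = x + (y + s) → x = y) _ _ _ hi
      rw [← pr_lift c, this]
    · right
      have : lift c = r + sing j + sing j' := by
        have := hp
        rw [h] at this
        funext i
        have hi := congrFun this i
        simp only [Pi.add_apply] at hi ⊢
        exact (by decide : ∀ x y s t : ZMod 2, t = x + (y + s) → x = y + s + t) _ _ _ _ hi
      rw [← pr_lift c, this]
  · exact absurd ⟨h1, h2⟩ hmix1
  · exact absurd ⟨h1, h2⟩ hmix2
  · -- (n,n)
    have hp1 : wt (p + 1) = 1 := by rw [wt_add_ones, h1]; omega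
    have hq1 : wt (q + 1) = 1 := by rw [wt_add_ones, h2]; omega
    have h2' : wt ((p + 1) + sing j + sing j') = 1 := by
      have : (p + 1) + sing j + sing j' = q + 1 := by
        rw [hpq]
        funext i
        exact (by decide : ∀ x c d : ZMod 2, x + 1 + c + d = x + c + d + 1) _ _ _
      rw [this]
      exact hq1
    rcases key (p + 1) hp1 h2' with h | h
    · left
      have : lift c = r + 1 := by
        have h0 : p = sing j + 1 := by
          rw [← h]
          funext i
          exact (by decide : ∀ x : ZMod 2, x = x + 1 + 1) _
        rw [h0] at hp
        funext i
        have hi := congrFun hp i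
        simp only [Pi.add_apply, Pi.one_apply] at hi ⊢
        exact (by decide : ∀ x y s : ZMod 2, s + 1 = x + (y + s) → x = y + 1) _ _ _ hi
      rw [← pr_lift c, this, pr_add, pr_ones, add_zero]
    · right
      have : lift c = r + sing j + sing j' + 1 := by
        have h0 : p = sing j' + 1 := by
          rw [← h]
          funext i
          exact (by decide : ∀ x : ZMod 2, x = x + 1 + 1) _
        rw [h0] at hp
        funext i
        have hi := congrFun hp i
        simp only [Pi.add_apply, Pi.one_apply] at hi ⊢
        exact (by decide : ∀ x y s t : ZMod 2, t + 1 = x + (y + s) → x = y + s + t + 1) _ _ _ _ hi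
      rw [← pr_lift c, this, pr_add, pr_ones, add_zero]
lemma rigid (hn4 : 4 ≤ n) (he : Even n) (ψ : FQ n ≃g FQ n)
    (h0 : ψ 0 = 0) (hg : ∀ j, ψ (gen j) = gen j) (x : Fin n → ZMod 2) : ψ x = x := by
  have hn : 2 ≤ n := by omega
  suffices H : ∀ d : ℕ, ∀ v : Fin (n + 1) → ZMod 2, min (wt v) (wt (v + 1)) = d →
      ψ (pr v) = pr v by
    have := H _ (lift x) rfl
    rwa [pr_lift] at this
  intro d
  induction d using Nat.strong_induction_on with
  | _ d IH =>
  have main : ∀ v : Fin (n + 1) → ZMod 2, wt v = d → 2 * d ≤ n + 1 → ψ (pr v) = pr v := by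
    intro v hv hdn
    obtain ⟨k, hk⟩ := he
    have hd2 : 2 * d ≤ n := by omega
    match d, hv, hdn, hd2, IH with
    | 0, hv, hdn, hd2, IH =>
      have : v = 0 := wt_eq_zero hv
      subst this
      rw [pr_zero]
      exact h0
    | 1, hv, hdn, hd2, IH =>
      obtain ⟨j, hj⟩ := wt_eq_one hv
      subst hj
      exact hg j
    | (e+2), hv, hdn, hd2, IH =>
      set d := e + 2 with hd
      have h2d : 1 < wt v := by omega
      rw [wt] at h2d
      obtain ⟨j, hjmem, j', hj'mem, hne⟩ := Finset.one_lt_card.mp h2d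
      simp only [Finset.mem_filter, Finset.mem_univ, true_and] at hjmem hj'mem
      -- weights of the three nearby classes
      have hwy : wt (v + sing j) = d - 1 := by rw [wt_remove hjmem, hv]
      have hwz : wt (v + sing j') = d - 1 := by rw [wt_remove hj'mem, hv]
      have hvj'2 : (v + sing j) j' ≠ 0 := by
        show v j' + sing j j' ≠ 0
        rw [sing_ne (Ne.symm hne), add_zero]
        exact hj'mem
      have hwu : wt (v + sing j + sing j') = d - 2 := by
        rw [wt_remove hvj'2, hwy]
        omega
      have hψy : ψ (pr (v + sing j)) = pr (v + sing j) := by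
        apply IH (d - 1) (by omega)
        rw [wt_add_ones, hwy]
        omega
      have hψz : ψ (pr (v + sing j')) = pr (v + sing j') := by
        apply IH (d - 1) (by omega)
        rw [wt_add_ones, hwz]
        omega
      have hψu : ψ (pr (v + sing j + sing j')) = pr (v + sing j + sing j') := by
        apply IH (d - 2) (by omega)
        rw [wt_add_ones, hwu]
        omega
      -- adjacency
      have ha1 : (FQ n).Adj (pr v) (pr (v + sing j)) := by
        rw [adj_pr hn]
        left
        have : v + (v + sing j) = sing j := by
          funext i
          exact (by decide : ∀ a s : ZMod 2, a + (a + s) = s) _ _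
        rw [this, wt_sing]
      have ha2 : (FQ n).Adj (pr v) (pr (v + sing j')) := by
        rw [adj_pr hn]
        left
        have : v + (v + sing j') = sing j' := by
          funext i
          exact (by decide : ∀ a s : ZMod 2, a + (a + s) = s) _ _
        rw [this, wt_sing]
      have hc1 : (FQ n).Adj (ψ (pr v)) (pr (v + sing j)) := by
        rw [← hψy]
        exact ψ.map_rel_iff.mpr ha1
      have hc2 : (FQ n).Adj (ψ (pr v)) (pr (v + sing j')) := by
        rw [← hψz]
        exact ψ.map_rel_iff.mpr ha2
      rcases common_nbr hn4 hne (ψ (pr v)) hc1 hc2 with hcase | hcase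
      · exact hcase
      · exfalso
        have heq : ψ (pr v) = ψ (pr (v + sing j + sing j')) := by
          rw [hψu]
          exact hcase
        have heq2 : pr v = pr (v + sing j + sing j') := ψ.toEquiv.injective heq
        have := pr_eq_pr_wt heq2
        have hsum : v + (v + sing j + sing j') = sing j + sing j' := by
          funext i
          exact (by decide : ∀ a s t : ZMod 2, a + (a + s + t) = s + t) _ _ _
        rw [hsum, wt_sing_add_sing hne] at this
        omega
  intro v hmin
  rcases le_total (wt v) (wt (v + 1)) with hle | hle
  · have hsum := wt_add_wt_add_ones v
    exact main v (by omega) (by omega)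
  · have hsum := wt_add_wt_add_ones v
    have h1 := main (v + 1) (by omega) (by omega)
    rwa [pr_add, pr_ones, add_zero] at h1
/-! ### Neighbors of zero and classification -/

lemma adj_zero_iff (hn : 2 ≤ n) (x : Fin n → ZMod 2) :
    (FQ n).Adj 0 x ↔ ∃ j, x = gen j := by
  constructor
  · intro h
    have h' : (FQ n).Adj (pr 0) (pr (lift x)) := by rwa [pr_zero, pr_lift]
    rw [adj_pr hn] at h'
    have hz : (0 : Fin (n+1) → ZMod 2) + lift x = lift x := zero_add _
    rw [hz] at h'
    rcases h' with h1 | h1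
    · obtain ⟨j, hj⟩ := wt_eq_one h1
      exact ⟨j, by rw [← pr_lift x, hj]; rfl⟩
    · have h2 : wt (lift x + 1) = 1 := by rw [wt_add_ones, h1]; omega
      obtain ⟨j, hj⟩ := wt_eq_one h2
      refine ⟨j, ?_⟩
      have hlx : lift x = sing j + 1 := by
        rw [← hj]
        funext i
        exact (by decide : ∀ a : ZMod 2, a = a + 1 + 1) _
      rw [← pr_lift x, hlx, gen, pr_add, pr_ones, add_zero]
  · rintro ⟨j, rfl⟩
    have : (FQ n).Adj (pr 0) (pr (sing j)) := by
      rw [adj_pr hn, zero_add, wt_sing]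
      left; rfl
    rwa [pr_zero] at this

lemma gen_ne_gen (hn : 2 ≤ n) {j j' : Fin (n + 1)} (hjj : j ≠ j') : gen (n := n) j ≠ gen j' :=
  fun h => hjj (gen_injective hn h)

/-- Every automorphism fixing `0` and all `k`-classes pointwise equals `isoA σ` form:
here packaged as what we need. -/
lemma fix_zero_exists_perm (hn : 2 ≤ n) (hn4 : 4 ≤ n) (he : Even n) (φ : FQ n ≃g FQ n) (h0 : φ 0 = 0) :
    ∃ σ : Equiv.Perm (Fin (n + 1)), ∀ x, φ x = isoA hn σ x := by
  have hmap : ∀ j : Fin (n + 1), ∃ j', φ (gen j) = gen j' := by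
    intro j
    have h1 : (FQ n).Adj 0 (gen j) := (adj_zero_iff hn _).mpr ⟨j, rfl⟩
    have h2 : (FQ n).Adj (φ 0) (φ (gen j)) := φ.map_rel_iff.mpr h1
    rw [h0] at h2
    exact (adj_zero_iff hn _).mp h2
  choose f hf using hmap
  have hinj : Function.Injective f := by
    intro a b hab
    apply gen_injective hn
    apply φ.toEquiv.injective
    show φ (gen a) = φ (gen b)
    rw [hf a, hf b, hab]
  have hbij : Function.Bijective f := (Finite.injective_iff_bijective).mp hinj
  set σ : Equiv.Perm (Fin (n + 1)) := Equiv.ofBijective f hbij with hσ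
  have hσap : ∀ j, σ j = f j := fun j => rfl
  refine ⟨σ, ?_⟩
  set ψ : FQ n ≃g FQ n := φ.trans (isoA hn σ⁻¹) with hψ
  have hψ0 : ψ 0 = 0 := by
    show isoA hn σ⁻¹ (φ 0) = 0
    rw [h0]
    exact isoA_zero hn σ⁻¹
  have hψg : ∀ j, ψ (gen j) = gen j := by
    intro j
    show isoA hn σ⁻¹ (φ (gen j)) = gen j
    rw [hf j, ← hσap j, isoA_gen hn σ⁻¹ (σ j), Equiv.Perm.inv_def, Equiv.symm_apply_apply]
  have hrig := rigid hn4 he ψ hψ0 hψg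
  intro x
  have h1 : isoA hn σ⁻¹ (φ x) = x := hrig x
  have h2 : isoA hn σ (isoA hn σ⁻¹ (φ x)) = isoA hn σ x := by rw [h1]
  have h3 : ∀ y, isoA hn σ (isoA hn σ⁻¹ y) = y := by
    intro y
    rw [← pr_lift y, isoA_pr, isoA_pr]
    have : (lift y ∘ ⇑(σ⁻¹)⁻¹) ∘ ⇑σ⁻¹ = lift y := by
      funext i
      show lift y (σ⁻¹⁻¹ (σ⁻¹ i)) = lift y i
      rw [Equiv.Perm.inv_def, Equiv.symm_apply_apply]
    rw [this]
  rw [h3 (φ x)] at h2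
  exact h2

/-! ### The upper-bound determining set -/

variable (k : ℕ)

/-- The extended-coordinate test vectors. -/
def wvec (j : Fin k) : Fin (n + 1) → ZMod 2 :=
  fun i => if Nat.testBit i.val j.val then 1 else 0

lemma wvec_col_inj (hcode : n + 1 ≤ 2 ^ k) {a b : Fin (n + 1)}
    (h : ∀ j : Fin k, wvec (n := n) k j a = wvec k j b) : a = b := by
  have hbit : ∀ t : ℕ, Nat.testBit a.val t = Nat.testBit b.val t := by
    intro t
    rcases Nat.lt_or_ge t k with ht | ht
    · have := h ⟨t, ht⟩
      rw [wvec, wvec] at this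
      rcases Bool.eq_false_or_eq_true (Nat.testBit a.val t) with h1 | h1 <;>
        rcases Bool.eq_false_or_eq_true (Nat.testBit b.val t) with h2 | h2 <;>
          rw [h1, h2] <;> rw [h1, h2] at this <;> first | rfl | (exfalso; revert this; decide)
    · have ha : a.val < 2 ^ t := lt_of_lt_of_le (lt_of_lt_of_le a.isLt hcode)
        (Nat.pow_le_pow_right (by norm_num) ht)
      have hb : b.val < 2 ^ t := lt_of_lt_of_le (lt_of_lt_of_le b.isLt hcode)
        (Nat.pow_le_pow_right (by norm_num) ht)
      rw [Nat.testBit_lt_two_pow ha, Nat.testBit_lt_two_pow hb]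
  exact Fin.ext (Nat.eq_of_testBit_eq hbit)

lemma wvec_wt_parity (j : Fin k) (σ : Equiv.Perm (Fin (n + 1))) (he : Even n) :
    wvec (n := n) k j ∘ ⇑σ⁻¹ ≠ wvec k j + 1 := by
  intro h
  have h1 : wt (wvec (n := n) k j ∘ ⇑σ⁻¹) = wt (wvec k j) := wt_comp_perm _ _
  have h2 : wt (wvec (n := n) k j + 1) = n + 1 - wt (wvec k j) := wt_add_ones _
  rw [h, h2] at h1
  have h3 := wt_le (wvec (n := n) k j)
  obtain ⟨t, ht⟩ := he
  omega
/-! ### Upper bound -/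

lemma lift_zero : lift (0 : Fin n → ZMod 2) = 0 := by
  funext i
  induction i using Fin.lastCases with
  | last => rw [lift_last]; rfl
  | cast i => rw [lift_castSucc]; rfl

lemma pr_wvec_ne_zero {k : ℕ} (hklt : 2 ^ (k - 1) < n + 1) (j : Fin k) :
    pr (wvec (n := n) k j) ≠ 0 := by
  intro h
  rw [show (0 : Fin n → ZMod 2) = pr 0 from pr_zero.symm] at h
  have hjk : (2 : ℕ) ^ j.val < n + 1 :=
    lt_of_le_of_lt (Nat.pow_le_pow_right (by norm_num) (by omega : j.val ≤ k - 1)) hklt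
  rcases pr_eq_iff.mp h with h1 | h1
  · have := congrFun h1 ⟨2 ^ j.val, hjk⟩
    rw [wvec] at this
    simp only [Nat.testBit_two_pow_self, if_true] at this
    simp at this
  · have := congrFun h1 ⟨0, by omega⟩
    rw [wvec] at this
    simp only [Nat.zero_testBit, if_false] at this
    simp at this

lemma pr_wvec_inj {k : ℕ} (hklt : 2 ^ (k - 1) < n + 1) {j j' : Fin k}
    (h : pr (wvec (n := n) k j) = pr (wvec k j')) : j = j' := by
  have hjk : (2 : ℕ) ^ j'.val < n + 1 :=
    lt_of_le_of_lt (Nat.pow_le_pow_right (by norm_num) (by omega : j'.val ≤ k - 1)) hklt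
  rcases pr_eq_iff.mp h with h1 | h1
  · have := congrFun h1 ⟨2 ^ j'.val, hjk⟩
    rw [wvec, wvec] at this
    simp only [Nat.testBit_two_pow_self, if_true] at this
    rw [Nat.testBit_two_pow] at this
    by_cases hd : j'.val = j.val
    · exact Fin.ext hd.symm
    · rw [decide_eq_false hd] at this
      simp at this
  · have := congrFun h1 ⟨0, by omega⟩
    rw [Pi.add_apply, wvec, wvec] at this
    simp only [Nat.zero_testBit, if_false] at this
    simp at this

theorem upper_bound (hn : 2 ≤ n) (hn4 : 4 ≤ n) (he : Even n) :
    ∃ S : Set (Fin n → ZMod 2), S.ncard = Nat.clog 2 (n + 1) + 1 ∧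
      IsDeterminingSet (FQ n) S := by
  set k := Nat.clog 2 (n + 1) with hk
  have hcode : n + 1 ≤ 2 ^ k := Nat.le_pow_clog (by norm_num) _
  have hklt : 2 ^ (k - 1) < n + 1 := by
    have := Nat.pow_pred_clog_lt_self (b := 2) (by norm_num) (x := n + 1) (by omega)
    simpa [Nat.pred_eq_sub_one] using this
  set f : Fin (k + 1) → (Fin n → ZMod 2) :=
    Fin.cases 0 (fun j => pr (wvec k j)) with hf
  have hf0 : f 0 = 0 := rfl
  have hfs : ∀ j : Fin k, f j.succ = pr (wvec k j) := fun j => rfl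
  have hfinj : Function.Injective f := by
    intro a b hab
    induction a using Fin.cases with
    | zero =>
      induction b using Fin.cases with
      | zero => rfl
      | succ j => rw [hf0, hfs] at hab; exact absurd hab.symm (pr_wvec_ne_zero hklt j)
    | succ j =>
      induction b using Fin.cases with
      | zero => rw [hf0, hfs] at hab; exact absurd hab (pr_wvec_ne_zero hklt j)
      | succ j' => rw [hfs, hfs] at hab; rw [pr_wvec_inj hklt hab]
  refine ⟨Set.range f, ?_, ?_⟩
  · rw [← Set.image_univ, Set.ncard_image_of_injective _ hfinj, Set.ncard_univ,
      Nat.card_eq_fintype_card, Fintype.card_fin]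
  · intro φ hfix v
    have h0 : φ 0 = 0 := hfix 0 ⟨0, hf0⟩
    have hw : ∀ j : Fin k, φ (pr (wvec k j)) = pr (wvec k j) := fun j =>
      hfix _ ⟨j.succ, hfs j⟩
    obtain ⟨σ, hσ⟩ := fix_zero_exists_perm hn hn4 he φ h0
    have hcols : ∀ j : Fin k, wvec (n := n) k j ∘ ⇑σ⁻¹ = wvec k j := by
      intro j
      have h1 : isoA hn σ (pr (wvec k j)) = pr (wvec k j) := by
        rw [← hσ]; exact hw j
      rw [isoA_pr] at h1
      rcases pr_eq_iff.mp h1 with h2 | h2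
      · exact h2
      · exact absurd h2 (wvec_wt_parity k j σ he)
    have hid : ∀ i, σ⁻¹ i = i := by
      intro i
      apply wvec_col_inj k hcode
      intro j
      exact congrFun (hcols j) i
    have hσv := hσ v
    have hlift : lift v ∘ ⇑σ⁻¹ = lift v := by
      funext i
      show lift v (σ⁻¹ i) = lift v i
      rw [hid i]
    rw [hσv]
    show pr (lift v ∘ ⇑σ⁻¹) = v
    rw [hlift, pr_lift]

/-! ### Lower bound -/

lemma det_translate (hn : 2 ≤ n) {S : Set (Fin n → ZMod 2)}
    (hS : IsDeterminingSet (FQ n) S) (a : Fin n → ZMod 2) :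
    IsDeterminingSet (FQ n) ((fun x => x + a) '' S) := by
  intro φ hfix v
  set χ : FQ n ≃g FQ n := (isoT hn a).trans (φ.trans (isoT hn a)) with hχ
  have hχap : ∀ w, χ w = φ (w + a) + a := fun w => rfl
  have hχfix : ∀ s ∈ S, χ s = s := by
    intro s hs
    rw [hχap]
    have : φ (s + a) = s + a := hfix (s + a) ⟨s, hs, rfl⟩
    rw [this, add_assoc, add_self_vec, add_zero]
  have hall := hS χ hχfix (v + a)
  rw [hχap, add_assoc v a a, add_self_vec, add_zero] at hall
  exact add_right_cancel hall

theorem lower_bound (hn : 2 ≤ n) (hn4 : 4 ≤ n) {S : Set (Fin n → ZMod 2)}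
    (hdet : IsDeterminingSet (FQ n) S) :
    Nat.clog 2 (n + 1) + 1 ≤ S.ncard := by
  set k := Nat.clog 2 (n + 1) with hk
  have hklt : 2 ^ (k - 1) < n + 1 := by
    have := Nat.pow_pred_clog_lt_self (b := 2) (x := n + 1) (by norm_num) (by omega)
    simpa [Nat.pred_eq_sub_one] using this
  by_contra hcon
  push_neg at hcon
  have hSk : S.ncard ≤ k := by omega
  rcases S.eq_empty_or_nonempty with rfl | ⟨s₀, hs₀⟩
  · -- empty set is not determining
    set i0 : Fin (n + 1) := ⟨0, by omega⟩ with hi0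
    set i1 : Fin (n + 1) := ⟨1, by omega⟩ with hi1
    have h01 : i0 ≠ i1 := by
      intro h
      rw [hi0, hi1, Fin.mk.injEq] at h
      exact absurd h (by norm_num)
    have hfix : ∀ s ∈ (∅ : Set (Fin n → ZMod 2)), isoA hn (Equiv.swap i0 i1) s = s :=
      fun s hs => absurd hs (Set.notMem_empty s)
    have hall := hdet (isoA hn (Equiv.swap i0 i1)) hfix (gen i0)
    rw [isoA_gen, Equiv.swap_apply_left] at hall
    exact h01 (gen_injective hn hall).symm
  · set S' := (fun x => x + s₀) '' S with hS'
    have h0S : (0 : Fin n → ZMod 2) ∈ S' := ⟨s₀, hs₀, add_self_vec s₀⟩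
    have hS'det : IsDeterminingSet (FQ n) S' := det_translate hn hdet s₀
    have hS'card : S'.ncard = S.ncard :=
      Set.ncard_image_of_injective _ (add_left_injective s₀)
    set T := S' \ {0} with hT
    have hTcard : T.ncard = S.ncard - 1 := by
      rw [hT, Set.ncard_diff_singleton_of_mem h0S, hS'card]
    haveI : Fintype ↥T := Fintype.ofFinite _
    set col : Fin (n + 1) → (↥T → ZMod 2) := fun i t => lift (t : Fin n → ZMod 2) i with hcol
    have hcard : Fintype.card (↥T → ZMod 2) < Fintype.card (Fin (n + 1)) := by
      rw [Fintype.card_fin, ← Nat.card_eq_fintype_card, Nat.card_fun,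
        Nat.card_coe_set_eq, Nat.card_zmod, hTcard]
      calc 2 ^ (S.ncard - 1) ≤ 2 ^ (k - 1) :=
            Nat.pow_le_pow_right (by norm_num) (by omega)
        _ < n + 1 := hklt
    obtain ⟨i, i', hne, hcoleq⟩ := Fintype.exists_ne_map_eq_of_card_lt col hcard
    set Φ : FQ n ≃g FQ n := isoA hn (Equiv.swap i i') with hΦ
    have hfix : ∀ s ∈ S', Φ s = s := by
      intro s hs
      have hsv : lift s i = lift s i' := by
        rcases eq_or_ne s 0 with rfl | hs0
        · rw [lift_zero]; rfl
        · exact congrFun hcoleq ⟨s, hs, hs0⟩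
      have hcomp : lift s ∘ ⇑(Equiv.swap i i') = lift s := by
        funext b
        show lift s (Equiv.swap i i' b) = lift s b
        rcases eq_or_ne b i with rfl | hbi
        · rw [Equiv.swap_apply_left, hsv]
        · rcases eq_or_ne b i' with rfl | hbi'
          · rw [Equiv.swap_apply_right, hsv]
          · rw [Equiv.swap_apply_of_ne_of_ne hbi hbi']
      show pr (lift s ∘ ⇑(Equiv.swap i i')⁻¹) = s
      rw [Equiv.swap_inv, hcomp, pr_lift]
    have hall := hS'det Φ hfix (gen i)
    rw [hΦ, isoA_gen, Equiv.swap_apply_left] at hall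
    exact hne (gen_injective hn hall).symm

end FQaux

/-- For even `n ≥ 4` not of the form `2^m - 1` or `2^m - 3`,
`det(FQ_n) = ⌈lg(n+1)⌉ + 1`. -/
theorem stmt13 (n : ℕ) (hn : 4 ≤ n) (he : Even n)
    (h1 : ¬∃ m : ℕ, n = 2 ^ m - 1) (h3 : ¬∃ m : ℕ, n = 2 ^ m - 3) :
    detNum (FQ n) = Nat.clog 2 (n + 1) + 1 := by
  have hn4 : 4 ≤ n := hn
  have hn2 : 2 ≤ n := by omega
  obtain ⟨S, hcard, hdet⟩ := FQaux.upper_bound hn2 hn4 he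
  apply le_antisymm
  · exact Nat.sInf_le ⟨S, hcard, hdet⟩
  · refine le_csInf ⟨Nat.clog 2 (n + 1) + 1, ?_⟩ ?_
    · exact ⟨S, hcard, hdet⟩
    · rintro r ⟨T, rfl, hT⟩
      exact FQaux.lower_bound hn2 hn4 hT
end

section
/- For n ≥ 3, the augmented hypercube AQ_n is neither edge-transitive nor arc-transitive. -/
/-- The augmented hypercube `AQ_n`: binary `n`-vectors, adjacent iff they differ
in exactly one position, or for some `ℓ ≤ n-2` they agree in the first `ℓ`
positions and differ in all remaining ones. -/
def AQ (n : ℕ) : SimpleGraph (Fin n → ZMod 2) :=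
  SimpleGraph.fromRel (fun x y => hammingDist x y = 1 ∨
    ∃ l : ℕ, l ≤ n - 2 ∧ (∀ i : Fin n, (i : ℕ) < l → x i = y i) ∧
      (∀ i : Fin n, l ≤ (i : ℕ) → x i ≠ y i))

/-- suffix-ones vector -/
def tvec (n l : ℕ) : Fin n → ZMod 2 := fun i => if l ≤ (i : ℕ) then 1 else 0

/-- standard basis vector -/
def evec (n j : ℕ) : Fin n → ZMod 2 := fun i => if (i : ℕ) = j then 1 else 0

lemma zmod2_ne0 {a : ZMod 2} (h : a ≠ 0) : a = 1 := by revert h; revert a; decide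

lemma zmod2_ne1 {a : ZMod 2} (h : a ≠ 1) : a = 0 := by revert h; revert a; decide

lemma zmod2_10 : (1 : ZMod 2) ≠ 0 := by decide

lemma AQ_adj {n : ℕ} (x y : Fin n → ZMod 2) :
    (AQ n).Adj x y ↔ x ≠ y ∧ (hammingDist x y = 1 ∨
      ∃ l : ℕ, l ≤ n - 2 ∧ (∀ i : Fin n, (i : ℕ) < l → x i = y i) ∧
        (∀ i : Fin n, l ≤ (i : ℕ) → x i ≠ y i)) := by
  rw [AQ, SimpleGraph.fromRel_adj]
  constructor
  · rintro ⟨hne, h | h⟩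
    · exact ⟨hne, h⟩
    · refine ⟨hne, ?_⟩
      rcases h with h | ⟨l, hl, h1, h2⟩
      · left; rwa [hammingDist_comm]
      · right; exact ⟨l, hl, fun i hi => (h1 i hi).symm, fun i hi => (h2 i hi).symm⟩
  · rintro ⟨hne, h⟩; exact ⟨hne, Or.inl h⟩

lemma hd_eq_one {n : ℕ} (x y : Fin n → ZMod 2) (a : Fin n)
    (h : ∀ i, x i ≠ y i ↔ i = a) : hammingDist x y = 1 := by
  have : ({i | x i ≠ y i} : Finset (Fin n)) = {a} := by
    ext i; simp [h i]
  rw [hammingDist, this, Finset.card_singleton]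

lemma hd_one_unique {n : ℕ} {x y : Fin n → ZMod 2} (h : hammingDist x y = 1)
    {a b : Fin n} (ha : x a ≠ y a) (hb : x b ≠ y b) : a = b := by
  rw [hammingDist, Finset.card_eq_one] at h
  obtain ⟨c, hc⟩ := h
  have ha' : a ∈ ({i | x i ≠ y i} : Finset (Fin n)) := by simpa using ha
  have hb' : b ∈ ({i | x i ≠ y i} : Finset (Fin n)) := by simpa using hb
  rw [hc, Finset.mem_singleton] at ha' hb'
  rw [ha', hb']

lemma adj_single {n : ℕ} (x y : Fin n → ZMod 2) (a : Fin n)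
    (h : ∀ i, x i ≠ y i ↔ i = a) : (AQ n).Adj x y := by
  rw [AQ_adj]
  exact ⟨fun he => ((h a).mpr rfl) (congrFun he a), Or.inl (hd_eq_one x y a h)⟩

/-- Any common neighbor of `0` and the all-ones vector is `e₀` or `t₁`. -/
lemma common_nbr {n : ℕ} (hn : 3 ≤ n) (z : Fin n → ZMod 2)
    (h0 : (AQ n).Adj 0 z) (h1 : (AQ n).Adj (tvec n 0) z) :
    z = evec n 0 ∨ z = tvec n 1 := by
  have ht0 : ∀ i : Fin n, tvec n 0 i = 1 := fun i => if_pos (Nat.zero_le _)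
  rw [AQ_adj] at h0 h1
  obtain ⟨hz0, h0⟩ := h0
  obtain ⟨hz1, h1⟩ := h1
  rcases h0 with hH0 | ⟨l, hl, hl1, hl2⟩
  · rcases h1 with hH1 | ⟨m, hm, hm1, hm2⟩
    · -- both hamming distance 1 : impossible since n ≥ 3
      exfalso
      have key : ∀ i j : Fin n, z i ≠ 0 → z j ≠ 0 → i = j := by
        intro i j hi hj
        exact hd_one_unique hH0 (by simpa using fun h => hi h.symm)
          (by simpa using fun h => hj h.symm)
      have key' : ∀ i j : Fin n, z i = 0 → z j = 0 → i = j := by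
        intro i j hi hj
        refine hd_one_unique hH1 ?_ ?_
        · rw [ht0 i, hi]; decide
        · rw [ht0 j, hj]; decide
      set a : Fin n := ⟨0, by omega⟩ with hadef
      set b : Fin n := ⟨1, by omega⟩ with hbdef
      set c : Fin n := ⟨2, by omega⟩ with hcdef
      have hab : a ≠ b := by simp [hadef, hbdef, Fin.ext_iff]
      have hac : a ≠ c := by simp [hadef, hcdef, Fin.ext_iff]
      have hbc : b ≠ c := by simp [hbdef, hcdef, Fin.ext_iff]
      rcases em (z a = 0) with ha | ha <;> rcases em (z b = 0) with hb | hb <;>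
        rcases em (z c = 0) with hc | hc
      · exact hab (key' a b ha hb)
      · exact hab (key' a b ha hb)
      · exact hac (key' a c ha hc)
      · exact hbc (key b c hb hc)
      · exact hbc (key' b c hb hc)
      · exact hac (key a c ha hc)
      · exact hab (key a b ha hb)
      · exact hab (key a b ha hb)
    · -- z is ones then zeros, with weight 1 ⇒ z = e₀
      left
      have hz : ∀ i : Fin n, ((i : ℕ) < m → z i = 1) ∧ (m ≤ (i : ℕ) → z i = 0) := by
        intro i
        constructor
        · intro hi; rw [← hm1 i hi, ht0]
        · intro hi
          have := hm2 i hi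
          rw [ht0] at this
          exact zmod2_ne1 (fun h => this h.symm)
      rcases Nat.eq_zero_or_pos m with hm0 | hmpos
      · exfalso; apply hz0
        funext i
        rw [(hz i).2 (by omega), Pi.zero_apply]
      have hm2' : m < 2 := by
        by_contra hge
        push_neg at hge
        have ha : z ⟨0, by omega⟩ ≠ 0 := by
          rw [(hz _).1 (by simp; omega)]; decide
        have hb : z ⟨1, by omega⟩ ≠ 0 := by
          rw [(hz _).1 (by simp; omega)]; decide
        have := hd_one_unique hH0 (a := ⟨0, by omega⟩) (b := ⟨1, by omega⟩)
          (by simpa using fun h => ha h.symm) (by simpa using fun h => hb h.symm)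
        simp [Fin.ext_iff] at this
      have hm1' : m = 1 := by omega
      subst hm1'
      funext i
      by_cases hi : (i : ℕ) = 0
      · rw [(hz i).1 (by omega)]
        simp only [evec]
        rw [if_pos hi]
      · rw [(hz i).2 (by omega)]
        simp only [evec]
        rw [if_neg hi]
  · -- z is zeros then ones from position l
    have hz : ∀ i : Fin n, ((i : ℕ) < l → z i = 0) ∧ (l ≤ (i : ℕ) → z i = 1) := by
      intro i
      refine ⟨fun hi => (hl1 i hi).symm, fun hi => ?_⟩
      have := hl2 i hi
      rw [Pi.zero_apply] at this
      exact zmod2_ne0 (fun h => this h.symm)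
    rcases h1 with hH1 | ⟨m, hm, hm1, hm2⟩
    · -- weight-of-zeros is 1
      right
      rcases Nat.eq_zero_or_pos l with hl0 | hlpos
      · exfalso; apply hz1
        funext i
        rw [(hz i).2 (by omega), ht0]
      have hl2' : l < 2 := by
        by_contra hge
        push_neg at hge
        have ha : z ⟨0, by omega⟩ = 0 := (hz _).1 (by simp; omega)
        have hb : z ⟨1, by omega⟩ = 0 := (hz _).1 (by simp; omega)
        have := hd_one_unique hH1 (a := ⟨0, by omega⟩) (b := ⟨1, by omega⟩)
          (by rw [ht0, ha]; decide) (by rw [ht0, hb]; decide)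
        simp [Fin.ext_iff] at this
      have hl1' : l = 1 := by omega
      subst hl1'
      funext i
      by_cases hi : (i : ℕ) = 0
      · rw [(hz i).1 (by omega)]
        simp only [tvec]
        rw [if_neg (by omega)]
      · rw [(hz i).2 (by omega)]
        simp only [tvec]
        rw [if_pos (by omega)]
    · -- both suffix patterns: contradiction at index n-1
      exfalso
      have h1' : z ⟨n - 1, by omega⟩ = 1 := (hz _).2 (by simp; omega)
      have h2 := hm2 ⟨n - 1, by omega⟩ (by simp; omega)
      rw [ht0, h1'] at h2
      exact h2 rfl

/-- For `n ≥ 3`, `AQ_n` is neither edge-transitive nor arc-transitive. -/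
theorem stmt17 (n : ℕ) (hn : 3 ≤ n) :
    (¬ ∀ a b c d : Fin n → ZMod 2, (AQ n).Adj a b → (AQ n).Adj c d →
        ∃ φ : AQ n ≃g AQ n, (φ a = c ∧ φ b = d) ∨ (φ a = d ∧ φ b = c)) ∧
    (¬ ∀ a b c d : Fin n → ZMod 2, (AQ n).Adj a b → (AQ n).Adj c d →
        ∃ φ : AQ n ≃g AQ n, φ a = c ∧ φ b = d) := by
  have main : ¬ ∀ a b c d : Fin n → ZMod 2, (AQ n).Adj a b → (AQ n).Adj c d →
      ∃ φ : AQ n ≃g AQ n, (φ a = c ∧ φ b = d) ∨ (φ a = d ∧ φ b = c) := by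
    intro h
    have adj_0b : (AQ n).Adj 0 (tvec n (n - 2)) := by
      rw [AQ_adj]
      constructor
      · intro he
        have := congrFun he ⟨n - 1, by omega⟩
        rw [Pi.zero_apply] at this
        simp only [tvec] at this
        rw [if_pos (by simp; omega)] at this
        exact zmod2_10 this.symm
      · right
        refine ⟨n - 2, le_refl _, fun i hi => ?_, fun i hi => ?_⟩
        · rw [Pi.zero_apply]; simp only [tvec]; rw [if_neg (by omega)]
        · rw [Pi.zero_apply]; simp only [tvec]; rw [if_pos hi]
          exact fun h => zmod2_10 h.symm
    have adj_0d : (AQ n).Adj 0 (tvec n 0) := by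
      rw [AQ_adj]
      constructor
      · intro he
        have := congrFun he ⟨0, by omega⟩
        rw [Pi.zero_apply] at this
        simp only [tvec] at this
        rw [if_pos (by omega)] at this
        exact zmod2_10 this.symm
      · right
        refine ⟨0, by omega, fun i hi => (by omega : False).elim, fun i hi => ?_⟩
        rw [Pi.zero_apply]; simp only [tvec]; rw [if_pos (by omega)]
        exact fun h => zmod2_10 h.symm
    have adj_0z1 : (AQ n).Adj 0 (evec n (n - 2)) := by
      apply adj_single _ _ ⟨n - 2, by omega⟩
      intro i
      rw [Pi.zero_apply, Fin.ext_iff]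
      simp only [evec, Fin.val_mk]
      by_cases hi : (i : ℕ) = n - 2
      · rw [if_pos hi]; simp [hi, zmod2_10.symm]
      · rw [if_neg hi]; simp [hi]
    have adj_0z2 : (AQ n).Adj 0 (evec n (n - 1)) := by
      apply adj_single _ _ ⟨n - 1, by omega⟩
      intro i
      rw [Pi.zero_apply, Fin.ext_iff]
      simp only [evec, Fin.val_mk]
      by_cases hi : (i : ℕ) = n - 1
      · rw [if_pos hi]; simp [hi, zmod2_10.symm]
      · rw [if_neg hi]; simp [hi]
    have adj_0z3 : (AQ n).Adj 0 (tvec n (n - 3)) := by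
      rw [AQ_adj]
      constructor
      · intro he
        have := congrFun he ⟨n - 1, by omega⟩
        rw [Pi.zero_apply] at this
        simp only [tvec] at this
        rw [if_pos (by simp; omega)] at this
        exact zmod2_10 this.symm
      · right
        refine ⟨n - 3, by omega, fun i hi => ?_, fun i hi => ?_⟩
        · rw [Pi.zero_apply]; simp only [tvec]; rw [if_neg (by omega)]
        · rw [Pi.zero_apply]; simp only [tvec]; rw [if_pos hi]
          exact fun h => zmod2_10 h.symm
    have adj_bz1 : (AQ n).Adj (tvec n (n - 2)) (evec n (n - 2)) := by
      apply adj_single _ _ ⟨n - 1, by omega⟩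
      intro i
      have hlt := i.isLt
      rw [Fin.ext_iff]
      simp only [tvec, evec, Fin.val_mk]
      rcases Nat.lt_trichotomy (i : ℕ) (n - 2) with hc | hc | hc
      · rw [if_neg (by omega), if_neg (by omega)]; simp; omega
      · rw [if_pos (by omega), if_pos hc]; simp; omega
      · have hc' : (i : ℕ) = n - 1 := by omega
        rw [if_pos (by omega), if_neg (by omega)]
        simp [zmod2_10, hc']
    have adj_bz2 : (AQ n).Adj (tvec n (n - 2)) (evec n (n - 1)) := by
      apply adj_single _ _ ⟨n - 2, by omega⟩
      intro i
      have hlt := i.isLt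
      rw [Fin.ext_iff]
      simp only [tvec, evec, Fin.val_mk]
      rcases Nat.lt_trichotomy (i : ℕ) (n - 2) with hc | hc | hc
      · rw [if_neg (by omega), if_neg (by omega)]; simp; omega
      · rw [if_pos (by omega), if_neg (by omega)]
        simp [zmod2_10, hc]
      · have hc' : (i : ℕ) = n - 1 := by omega
        rw [if_pos (by omega), if_pos hc']; simp; omega
    have adj_bz3 : (AQ n).Adj (tvec n (n - 2)) (tvec n (n - 3)) := by
      apply adj_single _ _ ⟨n - 3, by omega⟩
      intro i
      have hlt := i.isLt
      rw [Fin.ext_iff]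
      simp only [tvec, Fin.val_mk]
      rcases Nat.lt_trichotomy (i : ℕ) (n - 3) with hc | hc | hc
      · rw [if_neg (by omega), if_neg (by omega)]; simp; omega
      · rw [if_neg (by omega), if_pos (by omega)]
        exact ⟨fun _ => hc, fun _ h => zmod2_10 h.symm⟩
      · rw [if_pos (by omega), if_pos (by omega)]; simp; omega
    have ne12 : evec n (n - 2) ≠ evec n (n - 1) := by
      intro he
      have := congrFun he ⟨n - 2, by omega⟩
      simp only [evec, Fin.val_mk] at this
      rw [if_neg (by omega : ¬(n - 2 = n - 1))] at this
      rw [if_pos trivial] at this; exact zmod2_10 this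
    have ne13 : evec n (n - 2) ≠ tvec n (n - 3) := by
      intro he
      have := congrFun he ⟨n - 1, by omega⟩
      simp only [evec, tvec, Fin.val_mk] at this
      rw [if_neg (by omega), if_pos (by omega)] at this
      exact zmod2_10 this.symm
    have ne23 : evec n (n - 1) ≠ tvec n (n - 3) := by
      intro he
      have := congrFun he ⟨n - 3, by omega⟩
      simp only [evec, tvec, Fin.val_mk] at this
      rw [if_neg (by omega), if_pos (by omega)] at this
      exact zmod2_10 this.symm
    obtain ⟨φ, hφ⟩ := h 0 (tvec n (n - 2)) 0 (tvec n 0) adj_0b adj_0d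
    have himg : ∀ z : Fin n → ZMod 2, (AQ n).Adj 0 z → (AQ n).Adj (tvec n (n - 2)) z →
        φ z = evec n 0 ∨ φ z = tvec n 1 := by
      intro z h0z hbz
      have a0 : (AQ n).Adj (φ 0) (φ z) := φ.map_adj_iff.mpr h0z
      have ab : (AQ n).Adj (φ (tvec n (n - 2))) (φ z) := φ.map_adj_iff.mpr hbz
      rcases hφ with ⟨h1, h2⟩ | ⟨h1, h2⟩
      · rw [h1] at a0; rw [h2] at ab
        exact common_nbr hn (φ z) a0 ab
      · rw [h1] at a0; rw [h2] at ab
        exact common_nbr hn (φ z) ab a0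
    have h1 := himg _ adj_0z1 adj_bz1
    have h2 := himg _ adj_0z2 adj_bz2
    have h3 := himg _ adj_0z3 adj_bz3
    have inj : Function.Injective φ := φ.toEquiv.injective
    rcases h1 with h1 | h1 <;> rcases h2 with h2 | h2 <;> rcases h3 with h3 | h3
    · exact ne12 (inj (h1.trans h2.symm))
    · exact ne12 (inj (h1.trans h2.symm))
    · exact ne13 (inj (h1.trans h3.symm))
    · exact ne23 (inj (h2.trans h3.symm))
    · exact ne23 (inj (h2.trans h3.symm))
    · exact ne13 (inj (h1.trans h3.symm))
    · exact ne12 (inj (h1.trans h2.symm))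
    · exact ne12 (inj (h1.trans h2.symm))
  refine ⟨main, fun h => main ?_⟩
  intro a b c d hab hcd
  obtain ⟨φ, h1, h2⟩ := h a b c d hab hcd
  exact ⟨φ, Or.inl ⟨h1, h2⟩⟩
end
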